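/- Let q ≥ 3 and λ = 2cos(π/q), and consider the Hecke group G_q ⊆ PSL(2,ℝ) generated by S = [[0,1],[−1,0]] and T = [[1,λ],[0,1]]. If g = [[a,x],[b,y]] and h = [[a,u],[b,v]] are two elements of G_q with the same first column, then h = g·[[1,mλ],[0,1]] for some integer m; in particular the second element differs from the first by a power of T. -/

import Mathlib

open Real

/-- The generator `S = [[0,1],[-1,0]]` as an element of `SL(2,ℝ)`. -/
noncomputable def Smat : Matrix.SpecialLinearGroup (Fin 2) ℝ :=
  ⟨!![0, 1; -1, 0], by norm_num [Matrix.det_fin_two_of]⟩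

/-- The generator `T = [[1,λ_q],[0,1]]` as an element of `SL(2,ℝ)`. -/
noncomputable def Tmat (q : ℕ) : Matrix.SpecialLinearGroup (Fin 2) ℝ :=
  ⟨!![1, 2 * Real.cos (π / q); 0, 1], by norm_num [Matrix.det_fin_two_of]⟩

namespace Stmt10

abbrev SL2 := Matrix.SpecialLinearGroup (Fin 2) ℝ

instance : Fact (Even (Fintype.card (Fin 2))) := ⟨by simp⟩

open Matrix Matrix.SpecialLinearGroup

noncomputable def lam (q : ℕ) : ℝ := 2 * Real.cos (π / q)

noncomputable def sq (q k : ℕ) : ℝ := Real.sin (k * (π / q))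

noncomputable def bmat (q : ℕ) : SL2 := Smat * Tmat q

lemma S_coe : (Smat : Matrix (Fin 2) (Fin 2) ℝ) = !![0, 1; -1, 0] := rfl

lemma T_coe (q : ℕ) : (Tmat q : Matrix (Fin 2) (Fin 2) ℝ) = !![1, lam q; 0, 1] := rfl

lemma one_mat : (1 : Matrix (Fin 2) (Fin 2) ℝ) = !![1, 0; 0, 1] := Matrix.one_fin_two

lemma neg_one_mat : (-1 : Matrix (Fin 2) (Fin 2) ℝ) = !![-1, 0; 0, -1] := by
  ext i j
  fin_cases i <;> fin_cases j <;> simp [Matrix.one_fin_two]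

lemma neg_mat22 (a b c d : ℝ) : -(!![a, b; c, d]) = !![-a, -b; -c, -d] := by
  ext i j
  fin_cases i <;> fin_cases j <;> simp

lemma smul_mat22 (r a b c d : ℝ) : r • (!![a, b; c, d]) = !![r*a, r*b; r*c, r*d] := by
  ext i j
  fin_cases i <;> fin_cases j <;> simp [Matrix.smul_apply]

lemma S_mul_S : Smat * Smat = (-1 : SL2) := by
  apply Subtype.ext
  simp only [coe_mul, S_coe, coe_neg, coe_one]
  norm_num [Matrix.mul_fin_two]
  rw [neg_one_mat]

lemma S_inv : Smat⁻¹ = -Smat := by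
  apply inv_eq_of_mul_eq_one_right
  rw [mul_neg, S_mul_S, neg_neg]

lemma T_inv_coe (q : ℕ) : ((Tmat q)⁻¹ : SL2) = (⟨!![1, -lam q; 0, 1], by
    norm_num [Matrix.det_fin_two_of]⟩ : SL2) := by
  symm
  apply eq_inv_of_mul_eq_one_left
  apply Subtype.ext
  show (!![1, -lam q; 0, 1] : Matrix (Fin 2) (Fin 2) ℝ) * (Tmat q : Matrix (Fin 2) (Fin 2) ℝ)
      = (1 : Matrix (Fin 2) (Fin 2) ℝ)
  rw [T_coe]
  norm_num [Matrix.mul_fin_two]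
  exact one_mat.symm

/-- Every integer power of `T` is upper unitriangular. -/
lemma T_zpow (q : ℕ) (m : ℤ) :
    ∃ β : ℝ, ((Tmat q ^ m : SL2) : Matrix (Fin 2) (Fin 2) ℝ) = !![1, β; 0, 1] := by
  induction m using Int.induction_on with
  | zero => exact ⟨0, by simp [one_mat]⟩
  | succ n ih =>
    obtain ⟨β, hβ⟩ := ih
    refine ⟨lam q + β, ?_⟩
    rw [_root_.zpow_add_one, coe_mul, hβ, T_coe]
    norm_num [Matrix.mul_fin_two]
  | pred n ih =>
    obtain ⟨β, hβ⟩ := ih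
    refine ⟨-lam q + β, ?_⟩
    rw [_root_.zpow_sub_one, coe_mul, hβ]
    rw [T_inv_coe]
    show (!![1, β; 0, 1] : Matrix (Fin 2) (Fin 2) ℝ) * !![1, -lam q; 0, 1] = _
    norm_num [Matrix.mul_fin_two]

section q

variable {q : ℕ} (hq : 3 ≤ q)
include hq

lemma sq_pos {k : ℕ} (h1 : 1 ≤ k) (h2 : k ≤ q - 1) : 0 < sq q k := by
  have hq0 : (0:ℝ) < q := by exact_mod_cast Nat.lt_of_lt_of_le (by norm_num) hq
  apply Real.sin_pos_of_pos_of_lt_pi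
  · have hx : (0:ℝ) < π / q := by positivity
    have hk : (1:ℝ) ≤ k := by exact_mod_cast h1
    nlinarith
  · have hkq : (k:ℝ) < q := by exact_mod_cast Nat.lt_of_le_of_lt h2 (by omega)
    have hpi : 0 < π := Real.pi_pos
    rw [div_eq_mul_inv]
    calc (k:ℝ) * (π * (q:ℝ)⁻¹) < (q:ℝ) * (π * (q:ℝ)⁻¹) := by
          apply mul_lt_mul_of_pos_right hkq; positivity
      _ = π := by field_simp

lemma sq_nonneg' {k : ℕ} (h2 : k ≤ q) : 0 ≤ sq q k := by
  have hq0 : (0:ℝ) < q := by exact_mod_cast Nat.lt_of_lt_of_le (by norm_num) hq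
  apply Real.sin_nonneg_of_nonneg_of_le_pi
  · positivity
  · have hkq : (k:ℝ) ≤ q := by exact_mod_cast h2
    have hpi : 0 < π := Real.pi_pos
    rw [div_eq_mul_inv]
    calc (k:ℝ) * (π * (q:ℝ)⁻¹) ≤ (q:ℝ) * (π * (q:ℝ)⁻¹) := by
          apply mul_le_mul_of_nonneg_right hkq; positivity
      _ = π := by field_simp

lemma sq_one_pos : 0 < sq q 1 := sq_pos hq le_rfl (by omega)

omit hq in
lemma sq_zero : sq q 0 = 0 := by simp [sq]

omit hq in
lemma sq_rec (k : ℕ) : sq q (k + 2) = lam q * sq q (k + 1) - sq q k := by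
  unfold sq lam
  have h2 : ((k:ℝ) + 2) * (π / q) = ((k:ℝ) + 1) * (π / q) + π / q := by ring
  have h0 : (k:ℝ) * (π / q) = ((k:ℝ) + 1) * (π / q) - π / q := by ring
  push_cast
  rw [h2, h0, Real.sin_add, Real.sin_sub]
  ring

lemma sq_q_self : sq q q = 0 := by
  have hq0 : (q:ℝ) ≠ 0 := by
    have : (0:ℝ) < q := by exact_mod_cast Nat.lt_of_lt_of_le (by norm_num) hq
    linarith
  unfold sq
  rw [show ((q:ℝ) * (π / q)) = π by field_simp, Real.sin_pi]

lemma sq_q_sub_one : sq q (q - 1) = sq q 1 := by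
  have hq0 : (q:ℝ) ≠ 0 := by
    have : (0:ℝ) < q := by exact_mod_cast Nat.lt_of_lt_of_le (by norm_num) hq
    linarith
  unfold sq
  have hc : ((q - 1 : ℕ) : ℝ) = (q:ℝ) - 1 := by
    have h1 : 1 ≤ q := by omega
    push_cast [Nat.cast_sub h1]; ring
  rw [hc]
  have he : ((q:ℝ) - 1) * (π / q) = π - π / q := by field_simp
  rw [he, Real.sin_pi_sub]
  norm_num

lemma sq_q_add_one : sq q (q + 1) = -sq q 1 := by
  have hq0 : (q:ℝ) ≠ 0 := by
    have : (0:ℝ) < q := by exact_mod_cast Nat.lt_of_lt_of_le (by norm_num) hq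
    linarith
  unfold sq
  have he : ((q:ℝ) + 1) * (π / q) = π + π / q := by field_simp
  push_cast
  rw [he, Real.sin_add, Real.sin_pi, Real.cos_pi, one_mul]
  ring

omit hq in
lemma b_coe : (bmat q : Matrix (Fin 2) (Fin 2) ℝ) = !![0, 1; -1, -lam q] := by
  unfold bmat
  rw [coe_mul, S_coe, T_coe]
  norm_num [Matrix.mul_fin_two]

lemma b_pow (k : ℕ) : ((bmat q ^ (k + 1) : SL2) : Matrix (Fin 2) (Fin 2) ℝ) =
    ((-1:ℝ)^k / sq q 1) •
      !![sq q k, sq q (k + 1); -sq q (k + 1), -sq q (k + 2)] := by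
  have hs1 : sq q 1 ≠ 0 := ne_of_gt (sq_one_pos hq)
  induction k with
  | zero =>
    rw [pow_one, b_coe]
    have h2 : sq q 2 = lam q * sq q 1 := by
      have h := sq_rec (q := q) 0
      rw [sq_zero] at h; linarith
    ext i j
    fin_cases i <;> fin_cases j <;>
      · simp only [Matrix.smul_apply, sq_zero, h2, Fin.zero_eta, Fin.mk_one, Matrix.of_apply, zero_add, Matrix.cons_val', Matrix.cons_val_zero,
          Matrix.cons_val_one, Matrix.head_cons, Matrix.head_fin_const, Matrix.empty_val',
          Matrix.cons_val_fin_one, smul_eq_mul, pow_zero]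
        rw [div_mul_eq_mul_div, one_mul, eq_div_iff hs1]
        ring
  | succ n ih =>
    rw [pow_succ, coe_mul, ih, b_coe]
    have hrec := sq_rec (q := q) (n + 1)
    have hrec0 := sq_rec (q := q) n
    rw [show n + 1 + 2 = n + 3 by omega, show n + 1 + 1 = n + 2 by omega] at hrec
    have e1 : n + 1 + 1 = n + 2 := by omega
    have e2 : n + 1 + 2 = n + 3 := by omega
    rw [e1, e2, hrec, hrec0]
    ext i j
    fin_cases i <;> fin_cases j <;>
      · simp only [Matrix.smul_apply, Matrix.mul_apply, Fin.sum_univ_two, Fin.zero_eta, Fin.mk_one, Matrix.of_apply, Matrix.cons_val',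
          Matrix.cons_val_zero, Matrix.cons_val_one, Matrix.head_cons, Matrix.empty_val',
          Matrix.cons_val_fin_one, Matrix.head_fin_const, smul_eq_mul]
        field_simp
        ring

lemma b_pow_q : bmat q ^ q = (1 : SL2) ∨ bmat q ^ q = (-1 : SL2) := by
  have hco := b_pow hq (q - 1)
  have e1 : q - 1 + 1 = q := by omega
  have e2 : q - 1 + 2 = q + 1 := by omega
  rw [sq_q_sub_one hq, e1, sq_q_self hq, e2, sq_q_add_one hq] at hco
  have hs1 : sq q 1 ≠ 0 := ne_of_gt (sq_one_pos hq)
  rcases Nat.even_or_odd (q - 1) with he | ho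
  · left
    apply Subtype.ext
    rw [coe_one, hco, he.neg_one_pow]
    ext i j
    fin_cases i <;> fin_cases j <;>
      · simp [Matrix.smul_apply, one_mat]
        try field_simp
  · right
    apply Subtype.ext
    rw [coe_neg, coe_one, hco, ho.neg_one_pow]
    ext i j
    fin_cases i <;> fin_cases j <;>
      · simp [Matrix.smul_apply, one_mat]
        try field_simp

/-- `b^(q-1) * S = ± T⁻¹`. -/
lemma b_q_sub_one_mul_S :
    bmat q ^ (q - 1) * Smat = (Tmat q)⁻¹ ∨ bmat q ^ (q - 1) * Smat = -(Tmat q)⁻¹ := by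
  have key : bmat q ^ (q - 1) * (Smat * Tmat q) = bmat q ^ q := by
    have h : bmat q ^ (q - 1) * bmat q = bmat q ^ q := by
      rw [← pow_succ]; congr 1; omega
    rw [← h]; rfl
  rcases b_pow_q hq with h | h
  · left
    have h2 : bmat q ^ (q - 1) * Smat * Tmat q = 1 := by rw [mul_assoc, key, h]
    exact eq_inv_of_mul_eq_one_left h2
  · right
    have h2 : (-(bmat q ^ (q - 1) * Smat)) * Tmat q = 1 := by
      rw [neg_mul, mul_assoc, key, h, neg_neg]
    have h3 := eq_inv_of_mul_eq_one_left h2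
    rw [← h3, neg_neg]

end q

/-! ### Words -/

inductive Ltr where
  | A : Ltr
  | B : ℕ → Ltr
deriving DecidableEq

def Ltr.isB : Ltr → Bool
  | .A => false
  | .B _ => true

noncomputable def evalL (q : ℕ) : Ltr → SL2
  | .A => Smat
  | .B k => bmat q ^ k

noncomputable def evalW (q : ℕ) (w : List Ltr) : SL2 := (w.map (evalL q)).prod

def headB : List Ltr → Bool
  | [] => false
  | l :: _ => l.isB

def AltW (q : ℕ) (w : List Ltr) : Prop :=
  (∀ k : ℕ, Ltr.B k ∈ w → 1 ≤ k ∧ k ≤ q - 1) ∧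
    w.Chain' (fun x y => x.isB ≠ y.isB)

lemma evalW_nil (q : ℕ) : evalW q [] = 1 := rfl

lemma evalW_cons (q : ℕ) (l : Ltr) (w : List Ltr) :
    evalW q (l :: w) = evalL q l * evalW q w := by
  simp [evalW, List.prod_cons]

lemma AltW.nil (q : ℕ) : AltW q [] := ⟨by simp, by simp [List.Chain']⟩

lemma AltW.tail {q : ℕ} {l : Ltr} {w : List Ltr} (h : AltW q (l :: w)) : AltW q w :=
  ⟨fun k hk => h.1 k (List.mem_cons_of_mem _ hk), h.2.tail⟩

/-- Equality up to sign. -/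
def Pm (X Y : SL2) : Prop := X = Y ∨ X = -Y

lemma Pm.refl (X : SL2) : Pm X X := Or.inl rfl

lemma Pm.of_eq {X Y : SL2} (h : X = Y) : Pm X Y := Or.inl h

lemma Pm.mull (Z : SL2) {X Y : SL2} (h : Pm X Y) : Pm (Z * X) (Z * Y) := by
  rcases h with rfl | rfl
  · exact Or.inl rfl
  · exact Or.inr (by rw [mul_neg])

lemma Pm.negl {X Y : SL2} (h : Pm X Y) : Pm (-X) Y := by
  rcases h with rfl | rfl
  · exact Or.inr rfl
  · exact Or.inl (neg_neg Y)

lemma Pm.negr {X Y : SL2} (h : Pm X Y) : Pm X (-Y) := by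
  rcases h with rfl | rfl
  · exact Or.inr (neg_neg X).symm
  · exact Or.inl rfl

lemma Pm.trans {X Y Z : SL2} (h1 : Pm X Y) (h2 : Pm Y Z) : Pm X Z := by
  rcases h1 with rfl | rfl
  · exact h2
  · rcases h2 with rfl | rfl
    · exact Or.inr rfl
    · exact Or.inl (neg_neg Z)

lemma Pm.entry_prod {X Y : SL2} (h : Pm X Y) :
    (X : Matrix (Fin 2) (Fin 2) ℝ) 0 0 * (X : Matrix (Fin 2) (Fin 2) ℝ) 1 0 =
      (Y : Matrix (Fin 2) (Fin 2) ℝ) 0 0 * (Y : Matrix (Fin 2) (Fin 2) ℝ) 1 0 := by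
  rcases h with rfl | rfl
  · rfl
  · simp [coe_neg, Matrix.neg_apply]

section q2

variable {q : ℕ} (hq : 3 ≤ q)

/-! ### Normalization -/

lemma chain'_iso {l l' : Ltr} (h : l.isB = l'.isB) {t : List Ltr}
    (hc : t.Chain' (fun x y => x.isB ≠ y.isB)) (hh : ∀ y ∈ t.head?, l.isB ≠ y.isB) :
    (l' :: t).Chain' (fun x y => x.isB ≠ y.isB) := by
  rw [List.Chain', List.isChain_cons]
  exact ⟨fun y hy => h ▸ hh y hy, hc⟩

lemma stepA (w : List Ltr) (hw : AltW q w) :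
    ∃ w', AltW q w' ∧ Pm (Smat * evalW q w) (evalW q w') := by
  match w with
  | [] =>
    refine ⟨[.A], ⟨by simp, by simp [List.Chain']⟩, ?_⟩
    rw [evalW_nil, evalW_cons, evalW_nil]
    exact Pm.refl _
  | .A :: t =>
    refine ⟨t, hw.tail, ?_⟩
    rw [evalW_cons]
    show Pm (Smat * (Smat * evalW q t)) _
    rw [← mul_assoc, S_mul_S, neg_one_mul]
    exact Pm.negl (Pm.refl _)
  | .B k :: t =>
    refine ⟨.A :: .B k :: t, ?_, ?_⟩
    · refine ⟨?_, ?_⟩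
      · intro j hj
        rcases List.mem_cons.1 hj with hj | hj
        · exact absurd hj (by simp)
        · exact hw.1 j hj
      · rw [List.Chain', List.isChain_cons_cons]
        exact ⟨by simp [Ltr.isB], hw.2⟩
    · rw [evalW_cons (l := Ltr.A)]
      exact Pm.refl _

include hq in
lemma stepB (k : ℕ) (hk1 : 1 ≤ k) (hk2 : k ≤ q - 1) (w : List Ltr) (hw : AltW q w) :
    ∃ w', AltW q w' ∧ Pm (bmat q ^ k * evalW q w) (evalW q w') := by
  match w with
  | [] =>
    refine ⟨[.B k], ⟨?_, by simp [List.Chain']⟩, ?_⟩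
    · intro j hj
      simp at hj
      subst hj
      exact ⟨hk1, hk2⟩
    · rw [evalW_nil, evalW_cons, evalW_nil]
      exact Pm.refl _
  | .A :: t =>
    refine ⟨.B k :: .A :: t, ⟨?_, ?_⟩, ?_⟩
    · intro j hj
      rcases List.mem_cons.1 hj with hj | hj
      · cases hj; exact ⟨hk1, hk2⟩
      · exact hw.1 j hj
    · rw [List.Chain', List.isChain_cons_cons]
      exact ⟨by simp [Ltr.isB], hw.2⟩
    · rw [evalW_cons (l := Ltr.B k)]
      exact Pm.refl _
  | .B j :: t =>
    have hj := hw.1 j List.mem_cons_self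
    have ht : AltW q t := hw.tail
    have hhead : ∀ y ∈ t.head?, (Ltr.B j).isB ≠ y.isB := by
      have := hw.2
      rw [List.Chain', List.isChain_cons] at this
      exact this.1
    have hb : bmat q ^ k * evalW q (.B j :: t) = bmat q ^ (k + j) * evalW q t := by
      rw [evalW_cons]
      show bmat q ^ k * (bmat q ^ j * evalW q t) = _
      rw [← mul_assoc, ← pow_add]
    by_cases hle : k + j ≤ q - 1
    · refine ⟨.B (k + j) :: t, ⟨?_, chain'_iso rfl ht.2 hhead⟩, ?_⟩
      · intro i hi
        rcases List.mem_cons.1 hi with hi | hi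
        · cases hi; exact ⟨by omega, hle⟩
        · exact ht.1 i hi
      · rw [hb, evalW_cons (l := Ltr.B (k + j))]
        exact Pm.refl _
    · have hqle : q ≤ k + j := by omega
      have hd2 : k + j - q ≤ q - 2 := by omega
      have hsplit : bmat q ^ (k + j) = bmat q ^ (k + j - q) * bmat q ^ q := by
        rw [← pow_add]; congr 1; omega
      have hval : ∀ X : SL2, Pm (bmat q ^ q * X) X := by
        intro X
        rcases b_pow_q hq with hB | hB
        · rw [hB, one_mul]; exact Pm.refl _
        · rw [hB, neg_one_mul]; exact Pm.negl (Pm.refl _)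
      by_cases hd0 : k + j - q = 0
      · refine ⟨t, ht, ?_⟩
        rw [hb, hsplit, hd0, pow_zero, one_mul]
        exact hval _
      · refine ⟨.B (k + j - q) :: t, ⟨?_, chain'_iso rfl ht.2 hhead⟩, ?_⟩
        · intro i hi
          rcases List.mem_cons.1 hi with hi | hi
          · cases hi; exact ⟨by omega, by omega⟩
          · exact ht.1 i hi
        · rw [hb, hsplit, mul_assoc, evalW_cons (l := Ltr.B (k + j - q))]
          exact (hval (evalW q t)).mull (bmat q ^ (k + j - q))

include hq in
lemma gen_step (y : SL2)
    (hy : y = Smat ∨ y = Tmat q ∨ y = Smat⁻¹ ∨ y = (Tmat q)⁻¹)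
    (w : List Ltr) (hw : AltW q w) :
    ∃ w', AltW q w' ∧ Pm (y * evalW q w) (evalW q w') := by
  have hq1 : (1:ℕ) ≤ q - 1 := by omega
  rcases hy with rfl | rfl | rfl | rfl
  · exact stepA w hw
  · obtain ⟨w1, hw1, p1⟩ := stepB hq 1 le_rfl hq1 w hw
    obtain ⟨w2, hw2, p2⟩ := stepA w1 hw1
    refine ⟨w2, hw2, ?_⟩
    have hT : Tmat q * evalW q w = -(Smat * (bmat q ^ 1 * evalW q w)) := by
      rw [pow_one, ← mul_assoc]
      have hSb : Smat * bmat q = -(Tmat q) := by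
        unfold bmat
        rw [← mul_assoc, S_mul_S, neg_one_mul]
      rw [hSb, neg_mul, neg_neg]
    rw [hT]
    exact Pm.negl ((p1.mull Smat).trans p2)
  · obtain ⟨w', hw', p⟩ := stepA w hw
    refine ⟨w', hw', ?_⟩
    rw [S_inv, neg_mul]
    exact Pm.negl p
  · obtain ⟨w1, hw1, p1⟩ := stepA w hw
    obtain ⟨w2, hw2, p2⟩ := stepB hq (q - 1) hq1 le_rfl w1 hw1
    refine ⟨w2, hw2, ?_⟩
    have hcomb : Pm (bmat q ^ (q - 1) * (Smat * evalW q w)) (evalW q w2) :=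
      (p1.mull (bmat q ^ (q - 1))).trans p2
    rcases b_q_sub_one_mul_S hq with hB | hB
    · rw [← hB, mul_assoc]
      exact hcomb
    · have : (Tmat q)⁻¹ = -(bmat q ^ (q - 1) * Smat) := by rw [hB, neg_neg]
      rw [this, neg_mul, mul_assoc]
      exact Pm.negl hcomb

include hq in
lemma list_nf (l : List SL2)
    (hl : ∀ y ∈ l, y = Smat ∨ y = Tmat q ∨ y = Smat⁻¹ ∨ y = (Tmat q)⁻¹) :
    ∃ w, AltW q w ∧ Pm l.prod (evalW q w) := by
  induction l with
  | nil =>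
    exact ⟨[], AltW.nil q, by rw [List.prod_nil, evalW_nil]; exact Pm.refl _⟩
  | cons y t ih =>
    obtain ⟨w, hw, p⟩ := ih (fun z hz => hl z (List.mem_cons_of_mem _ hz))
    obtain ⟨w', hw', p'⟩ := gen_step hq y (hl y List.mem_cons_self) w hw
    refine ⟨w', hw', ?_⟩
    rw [List.prod_cons]
    exact (p.mull y).trans p'

include hq in
lemma mem_closure_nf (U : SL2)
    (hU : U ∈ Subgroup.closure ({Smat, Tmat q} : Set SL2)) :
    ∃ w, AltW q w ∧ Pm U (evalW q w) := by
  rw [← Subgroup.mem_toSubmonoid, Subgroup.closure_toSubmonoid] at hU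
  obtain ⟨l, hl, rfl⟩ := Submonoid.exists_list_of_mem_closure hU
  apply list_nf hq
  intro y hy
  rcases hl y hy with h | h
  · rcases h with h | h
    · exact Or.inl h
    · exact Or.inr (Or.inl h)
  · rw [Set.mem_inv] at h
    rcases h with h | h
    · refine Or.inr (Or.inr (Or.inl ?_))
      rw [← inv_inv y, h]
    · refine Or.inr (Or.inr (Or.inr ?_))
      rw [← inv_inv y, h]

end q2

/-! ### States -/

def StInf (q : ℕ) (w : List Ltr) : Prop := ∃ m : ℤ, Pm (evalW q w) (Tmat q ^ m)

def StZero (q : ℕ) (w : List Ltr) : Prop := ∃ m : ℤ, Pm (evalW q w) (Smat * Tmat q ^ m)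

def StPos (q : ℕ) (w : List Ltr) : Prop :=
  0 < (evalW q w : Matrix (Fin 2) (Fin 2) ℝ) 0 0 * (evalW q w : Matrix (Fin 2) (Fin 2) ℝ) 1 0

def StNeg (q : ℕ) (w : List Ltr) : Prop :=
  (evalW q w : Matrix (Fin 2) (Fin 2) ℝ) 0 0 * (evalW q w : Matrix (Fin 2) (Fin 2) ℝ) 1 0 < 0

lemma entry_S_mul (M : SL2) :
    ((Smat * M : SL2) : Matrix (Fin 2) (Fin 2) ℝ) 0 0 = (M : Matrix (Fin 2) (Fin 2) ℝ) 1 0 ∧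
    ((Smat * M : SL2) : Matrix (Fin 2) (Fin 2) ℝ) 1 0 = -((M : Matrix (Fin 2) (Fin 2) ℝ) 0 0) := by
  constructor <;>
  · rw [coe_mul, S_coe]
    simp [Matrix.mul_apply, Fin.sum_univ_two]

lemma entry_T_zpow (q : ℕ) (m : ℤ) :
    ((Tmat q ^ m : SL2) : Matrix (Fin 2) (Fin 2) ℝ) 0 0 = 1 ∧
    ((Tmat q ^ m : SL2) : Matrix (Fin 2) (Fin 2) ℝ) 1 0 = 0 := by
  obtain ⟨β, hβ⟩ := T_zpow q m
  rw [hβ]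
  constructor <;> simp

lemma entry_ST_zpow (q : ℕ) (m : ℤ) :
    ((Smat * Tmat q ^ m : SL2) : Matrix (Fin 2) (Fin 2) ℝ) 0 0 = 0 ∧
    ((Smat * Tmat q ^ m : SL2) : Matrix (Fin 2) (Fin 2) ℝ) 1 0 = -1 := by
  obtain ⟨h1, h2⟩ := entry_S_mul (Tmat q ^ m)
  obtain ⟨h3, h4⟩ := entry_T_zpow q m
  exact ⟨by rw [h1, h4], by rw [h2, h3]⟩

section q3

variable {q : ℕ} (hq : 3 ≤ q)

include hq in
lemma entry_bk_mul (K : ℕ) (M : SL2) :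
    ((bmat q ^ (K+1) * M : SL2) : Matrix (Fin 2) (Fin 2) ℝ) 0 0 =
      ((-1:ℝ)^K / sq q 1) *
        (sq q K * (M : Matrix (Fin 2) (Fin 2) ℝ) 0 0 +
          sq q (K+1) * (M : Matrix (Fin 2) (Fin 2) ℝ) 1 0) ∧
    ((bmat q ^ (K+1) * M : SL2) : Matrix (Fin 2) (Fin 2) ℝ) 1 0 =
      ((-1:ℝ)^K / sq q 1) *
        (-(sq q (K+1) * (M : Matrix (Fin 2) (Fin 2) ℝ) 0 0 +
          sq q (K+2) * (M : Matrix (Fin 2) (Fin 2) ℝ) 1 0)) := by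
  rw [coe_mul, b_pow hq K]
  constructor <;>
  · simp [Matrix.mul_apply, Fin.sum_univ_two, Matrix.smul_apply]
    ring

include hq in
lemma bk_prod (K : ℕ) (M : SL2) :
    (sq q 1)^2 * (((bmat q ^ (K+1) * M : SL2) : Matrix (Fin 2) (Fin 2) ℝ) 0 0 *
      ((bmat q ^ (K+1) * M : SL2) : Matrix (Fin 2) (Fin 2) ℝ) 1 0) =
    (sq q K * (M : Matrix (Fin 2) (Fin 2) ℝ) 0 0 +
        sq q (K+1) * (M : Matrix (Fin 2) (Fin 2) ℝ) 1 0) *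
      (-(sq q (K+1) * (M : Matrix (Fin 2) (Fin 2) ℝ) 0 0 +
        sq q (K+2) * (M : Matrix (Fin 2) (Fin 2) ℝ) 1 0)) := by
  have hs1 : sq q 1 ≠ 0 := ne_of_gt (sq_one_pos hq)
  have hP : ((-1:ℝ))^K * (-1)^K = 1 := by
    rw [← pow_add, ← two_mul, pow_mul]
    norm_num
  obtain ⟨e0, e1⟩ := entry_bk_mul hq K M
  rcases Nat.even_or_odd K with he | ho
  · rw [he.neg_one_pow] at e0 e1
    rw [e0, e1]
    field_simp
  · rw [ho.neg_one_pow] at e0 e1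
    rw [e0, e1]
    field_simp

set_option maxHeartbeats 2000000 in
include hq in
lemma good : ∀ w, AltW q w →
    (headB w = true → StInf q w ∨ StZero q w ∨ StNeg q w) ∧
    (headB w = false → StInf q w ∨ StZero q w ∨ StPos q w) := by
  intro w
  induction w with
  | nil =>
    intro _
    refine ⟨fun hcontra => by simp [headB] at hcontra, fun _ => Or.inl ⟨0, ?_⟩⟩
    rw [evalW_nil, zpow_zero]
    exact Pm.refl _
  | cons l t ih =>
    intro hw
    have ht := hw.tail
    obtain ⟨ihB, ihA⟩ := ih ht
    have hs1pos := sq_one_pos hq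
    cases l with
    | A =>
      refine ⟨fun hcontra => by simp [headB, Ltr.isB] at hcontra, fun _ => ?_⟩
      have hev : evalW q (.A :: t) = Smat * evalW q t := evalW_cons q _ t
      match t, ht, ihB, hw with
      | [], _, _, _ =>
        refine Or.inr (Or.inl ⟨0, ?_⟩)
        rw [hev, evalW_nil, zpow_zero]
        exact Pm.refl _
      | l' :: t', ht, ihB, hw =>
        have hl' : l'.isB = true := by
          have hch := hw.2
          rw [List.Chain', List.isChain_cons_cons] at hch
          cases hiso : l'.isB
          · exact absurd (hiso ▸ hch.1) (by simp [Ltr.isB])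
          · rfl
        rcases ihB hl' with hSt | hSt | hSt
        · obtain ⟨m, pm⟩ := hSt
          exact Or.inr (Or.inl ⟨m, by rw [hev]; exact pm.mull Smat⟩)
        · obtain ⟨m, pm⟩ := hSt
          refine Or.inl ⟨m, ?_⟩
          rw [hev]
          refine (pm.mull Smat).trans ?_
          rw [← mul_assoc, S_mul_S, neg_one_mul]
          exact Pm.negl (Pm.refl _)
        · refine Or.inr (Or.inr ?_)
          unfold StNeg at hSt
          unfold StPos
          obtain ⟨h00, h10⟩ := entry_S_mul (evalW q (l' :: t'))
          rw [hev, h00, h10]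
          nlinarith [hSt]
    | B k =>
      obtain ⟨hk1, hk2⟩ := hw.1 k List.mem_cons_self
      refine ⟨fun _ => ?_, fun hcontra => by simp [headB, Ltr.isB] at hcontra⟩
      have hev : evalW q (.B k :: t) = bmat q ^ k * evalW q t := evalW_cons q _ t
      have hbt : headB t = false := by
        match t, hw with
        | [], _ => rfl
        | l' :: t', hw =>
          have hch := hw.2
          rw [List.Chain', List.isChain_cons_cons] at hch
          cases hiso : l'.isB
          · exact hiso
          · exact absurd (hiso ▸ hch.1) (by simp [Ltr.isB])
      obtain ⟨K, rfl⟩ : ∃ K, k = K + 1 := ⟨k - 1, by omega⟩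
      have hKq : K + 1 ≤ q - 1 := hk2
      have hsK1 : 0 < sq q (K + 1) := sq_pos hq (by omega) (by omega)
      rcases ihA hbt with hSt | hSt | hSt
      · -- from StInf
        obtain ⟨m, pm⟩ := hSt
        by_cases hk : K = 0
        · subst hk
          refine Or.inr (Or.inl ⟨1 + m, ?_⟩)
          rw [hev, pow_one]
          refine (pm.mull (bmat q)).trans (Pm.of_eq ?_)
          unfold bmat
          rw [mul_assoc, ← _root_.zpow_one_add]
        · refine Or.inr (Or.inr ?_)
          unfold StNeg
          rw [hev]
          have hkey := bk_prod hq K (evalW q t)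
          obtain ⟨hT0, hT1⟩ := entry_T_zpow q m
          have hM0sq : (evalW q t : Matrix (Fin 2) (Fin 2) ℝ) 0 0 *
              (evalW q t : Matrix (Fin 2) (Fin 2) ℝ) 0 0 = 1 := by
            rcases pm with he | he
            · rw [he, hT0]; norm_num
            · rw [he, coe_neg, Matrix.neg_apply, hT0]; norm_num
          have hM1 : (evalW q t : Matrix (Fin 2) (Fin 2) ℝ) 1 0 = 0 := by
            rcases pm with he | he
            · rw [he, hT1]
            · rw [he, coe_neg, Matrix.neg_apply, hT1, neg_zero]
          have hsK : 0 < sq q K := sq_pos hq (by omega) (by omega)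
          rw [hM1] at hkey
          have h2 : sq q 1 ^ 2 * ((bmat q ^ (K+1) * evalW q t : SL2).1 0 0 *
              (bmat q ^ (K+1) * evalW q t : SL2).1 1 0) = -(sq q K * sq q (K + 1)) := by
            rw [hkey]
            linear_combination (-(sq q K * sq q (K + 1))) * hM0sq
          have hs2 : 0 < sq q 1 ^ 2 := by positivity
          nlinarith [h2, hs2, mul_pos hsK hsK1]
      · -- from StZero
        obtain ⟨m, pm⟩ := hSt
        by_cases hk : K + 1 = q - 1
        · refine Or.inl ⟨-1 + m, ?_⟩
          rw [hev, hk]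
          refine (pm.mull (bmat q ^ (q-1))).trans ?_
          rw [← mul_assoc]
          have hTm : (Tmat q)⁻¹ * Tmat q ^ m = Tmat q ^ (-1 + m) := by
            rw [← _root_.zpow_neg_one, ← _root_.zpow_add]
          rcases b_q_sub_one_mul_S hq with hB | hB
          · rw [hB, hTm]
            exact Pm.refl _
          · rw [hB, neg_mul, hTm]
            exact Pm.negl (Pm.refl _)
        · refine Or.inr (Or.inr ?_)
          unfold StNeg
          rw [hev]
          have hkey := bk_prod hq K (evalW q t)
          obtain ⟨hZ0, hZ1⟩ := entry_ST_zpow q m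
          have hM0 : (evalW q t : Matrix (Fin 2) (Fin 2) ℝ) 0 0 = 0 := by
            rcases pm with he | he
            · rw [he, hZ0]
            · rw [he, coe_neg, Matrix.neg_apply, hZ0, neg_zero]
          have hM1sq : (evalW q t : Matrix (Fin 2) (Fin 2) ℝ) 1 0 *
              (evalW q t : Matrix (Fin 2) (Fin 2) ℝ) 1 0 = 1 := by
            rcases pm with he | he
            · rw [he, hZ1]; norm_num
            · rw [he, coe_neg, Matrix.neg_apply, hZ1]; norm_num
          have hsK2 : 0 < sq q (K + 2) := sq_pos hq (by omega) (by omega)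
          rw [hM0] at hkey
          have h2 : sq q 1 ^ 2 * ((bmat q ^ (K+1) * evalW q t : SL2).1 0 0 *
              (bmat q ^ (K+1) * evalW q t : SL2).1 1 0) = -(sq q (K + 1) * sq q (K + 2)) := by
            rw [hkey]
            linear_combination (-(sq q (K + 1) * sq q (K + 2))) * hM1sq
          have hs2 : 0 < sq q 1 ^ 2 := by positivity
          nlinarith [h2, hs2, mul_pos hsK1 hsK2]
      · -- from StPos
        refine Or.inr (Or.inr ?_)
        unfold StPos at hSt
        unfold StNeg
        rw [hev]
        have hkey := bk_prod hq K (evalW q t)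
        have hsK : 0 ≤ sq q K := sq_nonneg' hq (by omega)
        have hsK2 : 0 ≤ sq q (K + 2) := sq_nonneg' hq (by omega)
        set a := (evalW q t : Matrix (Fin 2) (Fin 2) ℝ) 0 0 with ha
        set c := (evalW q t : Matrix (Fin 2) (Fin 2) ℝ) 1 0 with hc
        have hs2 : 0 < sq q 1 ^ 2 := by positivity
        rcases mul_pos_iff.1 hSt with ⟨hap, hcp⟩ | ⟨han, hcn⟩
        · have hF : 0 < sq q K * a + sq q (K + 1) * c := by
            nlinarith [mul_nonneg hsK hap.le, mul_pos hsK1 hcp]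
          have hG : 0 < sq q (K + 1) * a + sq q (K + 2) * c := by
            nlinarith [mul_pos hsK1 hap, mul_nonneg hsK2 hcp.le]
          have h2 : sq q 1 ^ 2 * ((bmat q ^ (K+1) * evalW q t : SL2).1 0 0 *
              (bmat q ^ (K+1) * evalW q t : SL2).1 1 0) =
              -((sq q K * a + sq q (K + 1) * c) * (sq q (K + 1) * a + sq q (K + 2) * c)) := by
            rw [hkey]; ring
          nlinarith [h2, hs2, mul_pos hF hG]
        · have hF : sq q K * a + sq q (K + 1) * c < 0 := by
            nlinarith [mul_nonpos_of_nonneg_of_nonpos hsK han.le, mul_neg_of_pos_of_neg hsK1 hcn]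
          have hG : sq q (K + 1) * a + sq q (K + 2) * c < 0 := by
            nlinarith [mul_neg_of_pos_of_neg hsK1 han, mul_nonpos_of_nonneg_of_nonpos hsK2 hcn.le]
          have h2 : sq q 1 ^ 2 * ((bmat q ^ (K+1) * evalW q t : SL2).1 0 0 *
              (bmat q ^ (K+1) * evalW q t : SL2).1 1 0) =
              -((sq q K * a + sq q (K + 1) * c) * (sq q (K + 1) * a + sq q (K + 2) * c)) := by
            rw [hkey]; ring
          nlinarith [h2, hs2, mul_pos_of_neg_of_neg hF hG]

end q3

end Stmt10

/-- Key step of Lemma 3.1: two elements of the Hecke group (the subgroup of `SL(2,ℝ)`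
generated by `S` and `T`) with the same first column differ by a power of `T`. -/
theorem stmt_10 (q : ℕ) (hq : 3 ≤ q) (g h : Matrix.SpecialLinearGroup (Fin 2) ℝ)
    (hg : g ∈ Subgroup.closure ({Smat, Tmat q} : Set (Matrix.SpecialLinearGroup (Fin 2) ℝ)))
    (hh : h ∈ Subgroup.closure ({Smat, Tmat q} : Set (Matrix.SpecialLinearGroup (Fin 2) ℝ)))
    (hcol : ∀ i, (g : Matrix (Fin 2) (Fin 2) ℝ) i 0 = (h : Matrix (Fin 2) (Fin 2) ℝ) i 0) :
    ∃ m : ℤ, h = g * (Tmat q) ^ m := by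
  classical
  set U : Stmt10.SL2 := g⁻¹ * h with hUdef
  have hUmem : U ∈ Subgroup.closure ({Smat, Tmat q} : Set Stmt10.SL2) :=
    mul_mem (inv_mem hg) hh
  -- the entries of U
  have hdet : (g : Matrix (Fin 2) (Fin 2) ℝ).det = 1 := g.2
  rw [Matrix.det_fin_two] at hdet
  have hUc : (U : Matrix (Fin 2) (Fin 2) ℝ) =
      Matrix.adjugate (g : Matrix (Fin 2) (Fin 2) ℝ) * (h : Matrix (Fin 2) (Fin 2) ℝ) := by
    rw [hUdef, Matrix.SpecialLinearGroup.coe_mul, Matrix.SpecialLinearGroup.coe_inv]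
  have hc0 : (h : Matrix (Fin 2) (Fin 2) ℝ) 0 0 = (g : Matrix (Fin 2) (Fin 2) ℝ) 0 0 :=
    (hcol 0).symm
  have hc1 : (h : Matrix (Fin 2) (Fin 2) ℝ) 1 0 = (g : Matrix (Fin 2) (Fin 2) ℝ) 1 0 :=
    (hcol 1).symm
  have hU00 : (U : Matrix (Fin 2) (Fin 2) ℝ) 0 0 = 1 := by
    rw [hUc, Matrix.adjugate_fin_two]
    simp [Matrix.mul_apply, Fin.sum_univ_two, hc0, hc1]
    linarith [hdet]
  have hU10 : (U : Matrix (Fin 2) (Fin 2) ℝ) 1 0 = 0 := by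
    rw [hUc, Matrix.adjugate_fin_two]
    simp [Matrix.mul_apply, Fin.sum_univ_two, hc0, hc1]
    ring
  -- normal form
  obtain ⟨w, hw, pm⟩ := Stmt10.mem_closure_nf hq U hUmem
  have hgood := Stmt10.good hq w hw
  have hdisj : Stmt10.StInf q w ∨ Stmt10.StZero q w ∨ Stmt10.StPos q w ∨ Stmt10.StNeg q w := by
    cases hh : Stmt10.headB w
    · rcases hgood.2 hh with h1 | h1 | h1
      · exact Or.inl h1
      · exact Or.inr (Or.inl h1)
      · exact Or.inr (Or.inr (Or.inl h1))
    · rcases hgood.1 hh with h1 | h1 | h1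
      · exact Or.inl h1
      · exact Or.inr (Or.inl h1)
      · exact Or.inr (Or.inr (Or.inr h1))
  rcases hdisj with hSt | hSt | hSt | hSt
  · -- StInf : U = ± T^m, and the sign must be +
    obtain ⟨m, pmw⟩ := hSt
    have pU : Stmt10.Pm U (Tmat q ^ m) := pm.trans pmw
    obtain ⟨hT0, _⟩ := Stmt10.entry_T_zpow q m
    rcases pU with hU | hU
    · refine ⟨m, ?_⟩
      rw [← hU, hUdef, mul_inv_cancel_left]
    · exfalso
      have : (U : Matrix (Fin 2) (Fin 2) ℝ) 0 0 = -1 := by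
        rw [hU, Matrix.SpecialLinearGroup.coe_neg, Matrix.neg_apply, hT0]
      rw [hU00] at this
      norm_num at this
  · -- StZero : impossible since U 1 0 = 0
    exfalso
    obtain ⟨m, pmw⟩ := hSt
    have pU : Stmt10.Pm U (Smat * Tmat q ^ m) := pm.trans pmw
    obtain ⟨_, hZ1⟩ := Stmt10.entry_ST_zpow q m
    rcases pU with hU | hU
    · rw [hU, hZ1] at hU10
      norm_num at hU10
    · rw [hU, Matrix.SpecialLinearGroup.coe_neg, Matrix.neg_apply, hZ1] at hU10
      norm_num at hU10
  · -- StPos : impossible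
    exfalso
    unfold Stmt10.StPos at hSt
    rw [← pm.entry_prod, hU00, hU10] at hSt
    norm_num at hSt
  · -- StNeg : impossible
    exfalso
    unfold Stmt10.StNeg at hSt
    rw [← pm.entry_prod, hU00, hU10] at hSt
    norm_num at hSt
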